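/- Suppose for a vector field ψ ∈ H¹(T)² on a domain T ⊂ ℝ², the Korn-type inequality inf_{α∈ℝ} ‖∇ψ - α J‖_{L²(T)} ≤ C ‖ε(ψ)‖_{L²(T)} holds, where J = [[0,1],[-1,0]] and ε(ψ) is the symmetric gradient. Then for the rotated gradient τ = ∇⊥ψ (with ∇⊥ψ having rows (∂₂ψ₁, -∂₁ψ₁) and (∂₂ψ₂, -∂₁ψ₂)) one has inf_{α∈ℝ} ‖τ - α I‖_{L²(T)} ≤ C ‖dev τ‖_{L²(T)}, and conversely. Hence the optimal constants in the local Korn inequality and the local dev-div inequality on T coincide. -/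
import Mathlib


open Matrix BigOperators MeasureTheory RealInnerProductSpace

noncomputable def frob (τ : Matrix (Fin 2) (Fin 2) ℝ) : ℝ :=
  Real.sqrt (∑ i, ∑ j, (τ i j) ^ 2)

noncomputable def finner (A B : Matrix (Fin 2) (Fin 2) ℝ) : ℝ :=
  ∑ i, ∑ j, A i j * B i j

noncomputable def asym (τ : Matrix (Fin 2) (Fin 2) ℝ) : Matrix (Fin 2) (Fin 2) ℝ :=
  (1 / 2 : ℝ) • (τ - τᵀ)

noncomputable def symMat (τ : Matrix (Fin 2) (Fin 2) ℝ) : Matrix (Fin 2) (Fin 2) ℝ :=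
  (1 / 2 : ℝ) • (τ + τᵀ)

noncomputable def devm (τ : Matrix (Fin 2) (Fin 2) ℝ) : Matrix (Fin 2) (Fin 2) ℝ :=
  τ - (τ.trace / 2) • (1 : Matrix (Fin 2) (Fin 2) ℝ)

noncomputable def Acomp (μ lam : ℝ) (τ : Matrix (Fin 2) (Fin 2) ℝ) :
    Matrix (Fin 2) (Fin 2) ℝ :=
  (1 / (2 * μ)) • (τ - (lam / (2 * (μ + lam)) * τ.trace) • (1 : Matrix (Fin 2) (Fin 2) ℝ))

noncomputable def Jm : Matrix (Fin 2) (Fin 2) ℝ := !![0, 1; -1, 0]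

noncomputable def rotm (G : Matrix (Fin 2) (Fin 2) ℝ) : Matrix (Fin 2) (Fin 2) ℝ :=
  Matrix.of fun i j => if j = 0 then G i 1 else -(G i 0)

/-- the local Korn inequality for ∇ψ (with constant C) holds iff the local
    dev-div inequality holds for the rotated gradient τ = ∇⊥ψ with the same constant C;
    in particular the optimal constants coincide. L² norms over the domain T are taken
    with respect to the underlying measure. -/
theorem korn_iff_devdiv {T : Type*} [MeasureSpace T]
    (ψgrad : T → Matrix (Fin 2) (Fin 2) ℝ) (C : ℝ) :
    ((⨅ α : ℝ, Real.sqrt (∫ x, (frob (ψgrad x - α • Jm)) ^ 2)) ≤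
        C * Real.sqrt (∫ x, (frob (symMat (ψgrad x))) ^ 2)) ↔
    ((⨅ α : ℝ,
        Real.sqrt (∫ x, (frob (rotm (ψgrad x) - α • (1 : Matrix (Fin 2) (Fin 2) ℝ))) ^ 2)) ≤
        C * Real.sqrt (∫ x, (frob (devm (rotm (ψgrad x)))) ^ 2)) := by
  have h1 : ∀ (G : Matrix (Fin 2) (Fin 2) ℝ) (α : ℝ),
      frob (rotm G - α • (1 : Matrix (Fin 2) (Fin 2) ℝ)) = frob (G - α • Jm) := by
    intro G α
    unfold frob rotm Jm
    congr 1
    simp [Fin.sum_univ_two, Matrix.sub_apply, Matrix.smul_apply, Matrix.one_apply]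
    ring
  have h2 : ∀ G : Matrix (Fin 2) (Fin 2) ℝ,
      frob (devm (rotm G)) = frob (symMat G) := by
    intro G
    unfold frob devm rotm symMat
    congr 1
    simp [Fin.sum_univ_two, Matrix.trace, Matrix.diag, Matrix.sub_apply, Matrix.add_apply,
      Matrix.smul_apply, Matrix.one_apply, Matrix.transpose_apply]
    ring
  simp_rw [h1, h2]
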